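/- Let a and b be positive semidefinite operators on a finite-dimensional complex Hilbert space H. Then range(a) ∩ range(b) = {0} if and only if the only positive semidefinite operator c with c ≤ a and c ≤ b (in the Loewner order) is c = 0. -/

import Mathlib

open scoped ComplexOrder
open Matrix

section Helpers

variable {n : ℕ}

private lemma dot_cs (u y : Fin n → ℂ) :
    ‖star u ⬝ᵥ y‖ ^ 2 ≤ (star u ⬝ᵥ u).re * (star y ⬝ᵥ y).re := by
  have h := inner_mul_inner_self_le (𝕜 := ℂ)
    ((WithLp.equiv 2 (Fin n → ℂ)).symm u) ((WithLp.equiv 2 (Fin n → ℂ)).symm y)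
  have hin : ∀ (p q : Fin n → ℂ),
      (inner ℂ ((WithLp.equiv 2 (Fin n → ℂ)).symm p) ((WithLp.equiv 2 (Fin n → ℂ)).symm q) : ℂ)
        = star p ⬝ᵥ q := by
    intro p q
    simp [PiLp.inner_apply, dotProduct, RCLike.inner_apply, mul_comm]
  rw [hin, hin, hin, hin] at h
  have hsymm : ‖star y ⬝ᵥ u‖ = ‖star u ⬝ᵥ y‖ := by
    have : star y ⬝ᵥ u = star (star u ⬝ᵥ y) := by
      simp [dotProduct, star_sum, mul_comm]
    rw [this, norm_star]
  rw [hsymm] at h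
  simpa [pow_two] using h

private lemma vecMulVec_smul_herm (v : Fin n → ℂ) (t : ℝ) :
    ((t:ℂ) • vecMulVec v (star v)).IsHermitian := by
  ext i j
  simp [Matrix.IsHermitian, conjTranspose_apply, vecMulVec_apply, mul_comm]

private lemma vecMulVec_mulVec' (v x : Fin n → ℂ) :
    vecMulVec v (star v) *ᵥ x = (star v ⬝ᵥ x) • v := by
  ext i
  simp [Matrix.mulVec, dotProduct, vecMulVec_apply, Finset.sum_mul, Finset.mul_sum]
  ring_nf

private lemma smul_vecMulVec_posSemidef (v : Fin n → ℂ) {t : ℝ} (ht : 0 ≤ t) :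
    ((t:ℂ) • vecMulVec v (star v)).PosSemidef := by
  refine PosSemidef.of_dotProduct_mulVec_nonneg (vecMulVec_smul_herm v t) fun x => ?_
  rw [smul_mulVec, dotProduct_smul, vecMulVec_mulVec', dotProduct_smul,
    smul_eq_mul, smul_eq_mul]
  have hxv : star x ⬝ᵥ v = star (star v ⬝ᵥ x) := by
    simp [dotProduct, star_sum, mul_comm]
  rw [mul_comm (star v ⬝ᵥ x) (star x ⬝ᵥ v), hxv, mul_comm (star (star v ⬝ᵥ x)),
    show star (star v ⬝ᵥ x) = starRingEnd ℂ (star v ⬝ᵥ x) from rfl, Complex.mul_conj,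
    ← Complex.ofReal_mul, Complex.zero_le_real]
  exact mul_nonneg ht (Complex.normSq_nonneg _)

private lemma ker_le_ker_of_le {a c : Matrix (Fin n) (Fin n) ℂ} (hc : c.PosSemidef)
    (hac : (a - c).PosSemidef) :
    LinearMap.ker a.mulVecLin ≤ LinearMap.ker c.mulVecLin := by
  intro x hx
  rw [LinearMap.mem_ker, mulVecLin_apply] at hx ⊢
  have h1 : (0:ℂ) ≤ star x ⬝ᵥ c *ᵥ x := hc.dotProduct_mulVec_nonneg x
  have h2 : (0:ℂ) ≤ star x ⬝ᵥ (a - c) *ᵥ x := hac.dotProduct_mulVec_nonneg x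
  have h3 : star x ⬝ᵥ (a - c) *ᵥ x = - (star x ⬝ᵥ c *ᵥ x) := by
    rw [sub_mulVec, dotProduct_sub, hx, dotProduct_zero, zero_sub]
  rw [h3] at h2
  exact (hc.dotProduct_mulVec_zero_iff x).mp
    (le_antisymm (by simpa using neg_nonneg.mp (by simpa using h2)) h1)

private lemma symm_range_eq {E : Type*} [NormedAddCommGroup E]
    [InnerProductSpace ℂ E] [FiniteDimensional ℂ E] {T : E →ₗ[ℂ] E}
    (hT : T.IsSymmetric) :
    LinearMap.range T = (LinearMap.ker T)ᗮ := by
  have hle : LinearMap.ker T ≤ (LinearMap.range T)ᗮ := by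
    intro x hx
    rw [Submodule.mem_orthogonal]
    rintro y ⟨z, rfl⟩
    rw [hT z x, LinearMap.mem_ker.mp hx, inner_zero_right]
  have h1 : LinearMap.ker T = (LinearMap.range T)ᗮ := by
    apply Submodule.eq_of_le_of_finrank_eq hle
    have e1 := Submodule.finrank_add_finrank_orthogonal (K := LinearMap.range T)
    have e2 := LinearMap.finrank_range_add_finrank_ker T
    omega
  rw [h1, Submodule.orthogonal_orthogonal]

private lemma range_le_range {E : Type*} [NormedAddCommGroup E]
    [InnerProductSpace ℂ E] [FiniteDimensional ℂ E] {T S : E →ₗ[ℂ] E}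
    (hT : T.IsSymmetric) (hS : S.IsSymmetric)
    (h : LinearMap.ker T ≤ LinearMap.ker S) :
    LinearMap.range S ≤ LinearMap.range T := by
  rw [symm_range_eq hT, symm_range_eq hS]
  exact Submodule.orthogonal_le h

private lemma mem_ker_toEuclideanLin {m : Matrix (Fin n) (Fin n) ℂ}
    {x : EuclideanSpace ℂ (Fin n)} :
    x ∈ LinearMap.ker (Matrix.toEuclideanLin m) ↔
      (WithLp.equiv 2 (Fin n → ℂ)) x ∈ LinearMap.ker m.mulVecLin := by
  simp [LinearMap.mem_ker, toEuclideanLin_apply]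

private lemma mem_range_toEuclideanLin {m : Matrix (Fin n) (Fin n) ℂ}
    {x : EuclideanSpace ℂ (Fin n)} :
    x ∈ LinearMap.range (Matrix.toEuclideanLin m) ↔
      (WithLp.equiv 2 (Fin n → ℂ)) x ∈ LinearMap.range m.mulVecLin := by
  constructor
  · rintro ⟨y, rfl⟩; exact ⟨(WithLp.equiv 2 (Fin n → ℂ)) y, rfl⟩
  · rintro ⟨y, hy⟩
    exact ⟨(WithLp.equiv 2 (Fin n → ℂ)).symm y,
      (WithLp.equiv 2 (Fin n → ℂ)).injective hy⟩

open scoped MatrixOrder in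
private lemma exists_scale {a : Matrix (Fin n) (Fin n) ℂ} (ha : a.PosSemidef)
    {w v : Fin n → ℂ} (hv : a *ᵥ w = v) (hv0 : v ≠ 0) :
    ∃ t : ℝ, 0 < t ∧ (a - (t:ℂ) • vecMulVec v (star v)).PosSemidef := by
  set s := CFC.sqrt a with hsdef
  have hs : s.PosSemidef := (CFC.sqrt_nonneg a).posSemidef
  have hss : s * s = a := CFC.sqrt_mul_sqrt_self a ha.nonneg
  set u := s *ᵥ w with hu
  have hvu : v = s *ᵥ u := by rw [hu, mulVec_mulVec, hss, hv]
  have hu0 : u ≠ 0 := by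
    intro h0
    exact hv0 (by rw [hvu, h0, mulVec_zero])
  have hnn : (0:ℂ) ≤ star u ⬝ᵥ u := dotProduct_star_self_nonneg u
  have hne : star u ⬝ᵥ u ≠ 0 := fun h => hu0 (dotProduct_star_self_eq_zero.mp h)
  have hlt : (0:ℂ) < star u ⬝ᵥ u := hnn.lt_of_ne (Ne.symm hne)
  set q : ℝ := (star u ⬝ᵥ u).re with hqdef
  have hq : 0 < q := (Complex.lt_def.mp hlt).1
  set r : ℝ := q⁻¹ with hrdef
  have hr : 0 < r := inv_pos.mpr hq
  refine ⟨r, hr, PosSemidef.of_dotProduct_mulVec_nonneg ?_ ?_⟩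
  · exact ha.1.sub (vecMulVec_smul_herm v r)
  · intro x
    set z : ℂ := star v ⬝ᵥ x with hzdef
    have hxv : star x ⬝ᵥ v = star z := by
      simp [hzdef, dotProduct, star_sum, mul_comm]
    have hterm : star x ⬝ᵥ ((r:ℂ) • vecMulVec v (star v)) *ᵥ x
        = (r:ℂ) * (z * star z) := by
      rw [smul_mulVec, dotProduct_smul, vecMulVec_mulVec', dotProduct_smul, hxv,
        smul_eq_mul, smul_eq_mul, ← hzdef]
    have hz : z = star u ⬝ᵥ (s *ᵥ x) := by
      rw [hzdef, hvu, star_mulVec, hs.1.eq, dotProduct_mulVec]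
    have hy : star (s *ᵥ x) ⬝ᵥ (s *ᵥ x) = star x ⬝ᵥ a *ᵥ x := by
      rw [star_mulVec, hs.1.eq, ← dotProduct_mulVec, mulVec_mulVec, hss]
    have hcs : ‖z‖ ^ 2 ≤ q * (star x ⬝ᵥ a *ᵥ x).re := by
      have := dot_cs u (s *ᵥ x)
      rw [← hz, hy] at this
      exact this
    have hA : (0:ℂ) ≤ star x ⬝ᵥ a *ᵥ x := ha.dotProduct_mulVec_nonneg x
    have hAim : (star x ⬝ᵥ a *ᵥ x).im = 0 := ((Complex.le_def.mp hA).2).symm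
    have hAre : (0:ℝ) ≤ (star x ⬝ᵥ a *ᵥ x).re := (Complex.le_def.mp hA).1
    have hAc : star x ⬝ᵥ a *ᵥ x = (((star x ⬝ᵥ a *ᵥ x).re : ℝ) : ℂ) :=
      (Complex.ext (by simp) (by simp [hAim])).symm
    rw [sub_mulVec, dotProduct_sub, hterm]
    have hzz : z * star z = ((‖z‖^2 : ℝ) : ℂ) := by
      rw [show star z = starRingEnd ℂ z from rfl, Complex.mul_conj]
      simp [Complex.normSq_eq_norm_sq]
    rw [hzz, hAc]
    have : ((r:ℂ)) * ((‖z‖^2 : ℝ) : ℂ) = ((r * ‖z‖^2 : ℝ) : ℂ) := by push_cast; ring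
    rw [this, ← Complex.ofReal_sub]
    rw [Complex.zero_le_real]
    have h2 : r * ‖z‖^2 ≤ r * (q * (star x ⬝ᵥ a *ᵥ x).re) :=
      mul_le_mul_of_nonneg_left hcs (le_of_lt hr)
    rw [hrdef, ← mul_assoc, inv_mul_cancel₀ (ne_of_gt hq), one_mul] at h2
    rw [hrdef] at *
    linarith

end Helpers

/-- for positive semidefinite operators `a, b` on a finite-dimensional complex
Hilbert space, `range a ∩ range b = {0}` iff the only positive semidefinite `c` with `c ≤ a`
and `c ≤ b` (Loewner order) is `c = 0`. -/
theorem range_inf_bot_iff_common_lower_bound_zero {n : ℕ}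
    (a b : Matrix (Fin n) (Fin n) ℂ) (ha : a.PosSemidef) (hb : b.PosSemidef) :
    (LinearMap.range a.mulVecLin ⊓ LinearMap.range b.mulVecLin = ⊥) ↔
      (∀ c : Matrix (Fin n) (Fin n) ℂ, c.PosSemidef → (a - c).PosSemidef →
        (b - c).PosSemidef → c = 0) := by
  constructor
  · intro h c hc hac hbc
    have hsa : (Matrix.toEuclideanLin a).IsSymmetric := isHermitian_iff_isSymmetric.mp ha.1
    have hsb : (Matrix.toEuclideanLin b).IsSymmetric := isHermitian_iff_isSymmetric.mp hb.1
    have hsc : (Matrix.toEuclideanLin c).IsSymmetric := isHermitian_iff_isSymmetric.mp hc.1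
    have hka : LinearMap.ker (Matrix.toEuclideanLin a) ≤
        LinearMap.ker (Matrix.toEuclideanLin c) := fun x hx =>
      mem_ker_toEuclideanLin.mpr (ker_le_ker_of_le hc hac (mem_ker_toEuclideanLin.mp hx))
    have hkb : LinearMap.ker (Matrix.toEuclideanLin b) ≤
        LinearMap.ker (Matrix.toEuclideanLin c) := fun x hx =>
      mem_ker_toEuclideanLin.mpr (ker_le_ker_of_le hc hbc (mem_ker_toEuclideanLin.mp hx))
    have hra := range_le_range hsa hsc hka
    have hrb := range_le_range hsb hsc hkb
    have h0 : LinearMap.range (Matrix.toEuclideanLin c) = ⊥ := by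
      rw [eq_bot_iff]
      intro x hx
      have h1 := mem_range_toEuclideanLin.mp (hra hx)
      have h2 := mem_range_toEuclideanLin.mp (hrb hx)
      have h3 : (WithLp.equiv 2 (Fin n → ℂ)) x ∈
          (⊥ : Submodule ℂ (Fin n → ℂ)) := h ▸ Submodule.mem_inf.mpr ⟨h1, h2⟩
      have hx0 : (WithLp.equiv 2 (Fin n → ℂ)) x = 0 := by simpa using h3
      simpa using hx0
    have : Matrix.toEuclideanLin c = 0 := LinearMap.range_eq_bot.mp h0
    exact Matrix.toEuclideanLin.injective (this.trans (map_zero _).symm)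
  · intro h
    by_contra hne
    obtain ⟨v, hv, hv0⟩ := (Submodule.ne_bot_iff _).mp hne
    obtain ⟨hva, hvb⟩ := Submodule.mem_inf.mp hv
    obtain ⟨wa, hwa⟩ := hva
    obtain ⟨wb, hwb⟩ := hvb
    rw [mulVecLin_apply] at hwa hwb
    obtain ⟨ta, hta, hpa⟩ := exists_scale ha hwa hv0
    obtain ⟨tb, htb, hpb⟩ := exists_scale hb hwb hv0
    set m : ℝ := min ta tb with hmdef
    have hm : 0 < m := lt_min hta htb
    set d := vecMulVec v (star v) with hddef
    have key : ∀ (a' : Matrix (Fin n) (Fin n) ℂ) (t₁ : ℝ), m ≤ t₁ →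
        (a' - (t₁:ℂ) • d).PosSemidef → (a' - (m:ℂ) • d).PosSemidef := by
      intro a' t₁ ht₁ hp
      have heq : a' - (m:ℂ) • d = (a' - (t₁:ℂ) • d) + ((t₁ - m : ℝ) : ℂ) • d := by
        push_cast
        rw [sub_smul]
        abel
      rw [heq]
      exact hp.add (smul_vecMulVec_posSemidef v (by linarith))
    have hc : ((m:ℂ) • d).PosSemidef := smul_vecMulVec_posSemidef v (le_of_lt hm)
    have hc0 := h _ hc (key a ta (min_le_left _ _) hpa) (key b tb (min_le_right _ _) hpb)
    obtain ⟨i, hi⟩ := Function.ne_iff.mp hv0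
    have : ((m:ℂ) • d) i i = 0 := by rw [hc0]; rfl
    rw [hddef] at this
    simp only [Matrix.smul_apply, vecMulVec_apply, Pi.star_apply, smul_eq_mul] at this
    have hvi : v i * star (v i) ≠ 0 := by
      rw [show star (v i) = starRingEnd ℂ (v i) from rfl, Complex.mul_conj]
      simpa using hi
    rcases mul_eq_zero.mp this with h' | h'
    · exact hm.ne' (by exact_mod_cast h')
    · exact hvi h'
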